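/- Let (θ_k^{(n)})_{n,k ∈ ℕ} be an array of i.i.d. copies of a positive random variable θ with μ := E[θ] ∈ (1,∞) and E[θ log⁺θ] < ∞, and define the random walks R^{(n)}(k) = θ_1^{(n)} + ⋯ + θ_k^{(n)}, R^{(n)}(0) = 0. Then for every T > 0, almost surely ∑_{n≥1} sup_{t ∈ [0,T]} |μ^{−n} R^{(n)}(⌊t μ^{n−1}⌋) − t| < ∞. -/

import Mathlib

open MeasureTheory ProbabilityTheory Filter
open scoped ENNReal NNReal

private lemma abs_le_eps (x ε : ℝ) (hε : 0 < ε) : |x| ≤ ε / 2 + (2 * ε)⁻¹ * x ^ 2 := by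
  have h2 : x ^ 2 = |x| ^ 2 := (sq_abs x).symm
  rw [h2]
  have hεinv : (2 * ε)⁻¹ * (2 * ε) = 1 := by
    field_simp
  nlinarith [sq_nonneg (|x| - ε), abs_nonneg x, mul_pos hε hε, inv_nonneg.2 (by linarith : (0:ℝ) ≤ 2 * ε)]

private noncomputable def trφ (c x : ℝ) : ℝ := if x ≤ c then x else 0
private noncomputable def trψ (c x : ℝ) : ℝ := if x ≤ c then 0 else x

private lemma trφ_meas (c : ℝ) : Measurable (trφ c) :=
  Measurable.ite measurableSet_Iic measurable_id measurable_const

private lemma trψ_meas (c : ℝ) : Measurable (trψ c) :=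
  Measurable.ite measurableSet_Iic measurable_const measurable_id

private lemma trφ_add_trψ (c x : ℝ) : trφ c x + trψ c x = x := by
  unfold trφ trψ; split <;> ring

private lemma trφ_nonneg (c x : ℝ) (hx : 0 < x) : 0 ≤ trφ c x := by
  unfold trφ; split; exacts [hx.le, le_rfl]

private lemma trψ_nonneg (c x : ℝ) (hx : 0 < x) : 0 ≤ trψ c x := by
  unfold trψ; split; exacts [le_rfl, hx.le]

private lemma trφ_le (c x : ℝ) (hx : 0 < x) : trφ c x ≤ x := by
  unfold trφ; split; exacts [le_rfl, hx.le]

private lemma trψ_le (c x : ℝ) (hx : 0 < x) : trψ c x ≤ x := by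
  unfold trψ; split; exacts [hx.le, le_rfl]

private lemma trφ_le_c (c x : ℝ) (hc : 0 ≤ c) : trφ c x ≤ c := by
  unfold trφ; split; exacts [‹_›, hc]

/-- If the integrals are summably bounded, then the (nonnegative) functions are a.e. summable. -/
private lemma ae_summable_aux {Ω : Type*} [MeasureSpace Ω] [IsProbabilityMeasure (ℙ : Measure Ω)]
    (Z : ℕ → Ω → ℝ) (hm : ∀ n, AEMeasurable (Z n) ℙ) (hi : ∀ n, Integrable (Z n) ℙ)
    (hnn : ∀ n, 0 ≤ᵐ[ℙ] Z n) (D : ℕ → ℝ) (hD : Summable D)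
    (hle : ∀ n, ∫ ω, Z n ω ≤ D n) : ∀ᵐ ω ∂ℙ, Summable fun n => Z n ω := by
  have hDnn : ∀ n, 0 ≤ D n := fun n => le_trans (integral_nonneg_of_ae (hnn n)) (hle n)
  have hkey : (∫⁻ ω, ∑' n, ENNReal.ofReal (Z n ω) ∂ℙ) < ⊤ := by
    rw [lintegral_tsum (f := fun n ω => ENNReal.ofReal (Z n ω)) fun n => (hm n).ennreal_ofReal]
    have h1 : ∀ n, ∫⁻ ω, ENNReal.ofReal (Z n ω) ∂ℙ = ENNReal.ofReal (∫ ω, Z n ω) :=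
      fun n => (ofReal_integral_eq_lintegral_ofReal (hi n) (hnn n)).symm
    calc (∑' n, ∫⁻ ω, ENNReal.ofReal (Z n ω) ∂ℙ)
        = ∑' n, ENNReal.ofReal (∫ ω, Z n ω) := by simp_rw [h1]
      _ ≤ ∑' n, ENNReal.ofReal (D n) :=
          ENNReal.tsum_le_tsum fun n => ENNReal.ofReal_le_ofReal (hle n)
      _ = ENNReal.ofReal (∑' n, D n) := (ENNReal.ofReal_tsum_of_nonneg hDnn hD).symm
      _ < ⊤ := ENNReal.ofReal_lt_top
  have haelt := ae_lt_top'
    (AEMeasurable.ennreal_tsum fun n => (hm n).ennreal_ofReal) hkey.ne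
  filter_upwards [haelt, ae_all_iff.2 hnn] with ω h1 h2
  exact (ENNReal.summable_toReal h1.ne).congr fun n => ENNReal.toReal_ofReal (h2 n)

/-- Summability of truncated tails under the `θ log θ` condition. -/
private lemma tail_summable {Ω : Type*} [MeasureSpace Ω] [IsProbabilityMeasure (ℙ : Measure Ω)]
    (θ0 : Ω → ℝ) (hpos : ∀ ω, 0 < θ0 ω) (hint : Integrable θ0)
    (hlog : Integrable (fun ω => θ0 ω * max (Real.log (θ0 ω)) 0))
    (r : ℝ) (hr : 1 < r) :
    Summable fun n => ∫ ω, trψ (r ^ n) (θ0 ω) := by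
  have hr0 : 0 < r := lt_trans one_pos hr
  have hL : 0 < Real.log r := Real.log_pos hr
  have hθ0m : AEMeasurable θ0 ℙ := hint.aemeasurable
  have hψnn : ∀ n (ω : Ω), 0 ≤ trψ (r ^ n) (θ0 ω) := fun n ω => trψ_nonneg _ _ (hpos ω)
  have hψm : ∀ n : ℕ, AEMeasurable (fun ω => trψ (r ^ n) (θ0 ω)) ℙ := fun n =>
    (trψ_meas _).comp_aemeasurable hθ0m
  have hψint : ∀ n : ℕ, Integrable (fun ω => trψ (r ^ n) (θ0 ω)) ℙ := fun n =>
    hint.mono (hψm n).aestronglyMeasurable (ae_of_all _ fun ω => by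
      rw [Real.norm_eq_abs, Real.norm_eq_abs, abs_of_nonneg (hψnn n ω), abs_of_pos (hpos ω)]
      exact trψ_le _ _ (hpos ω))
  set g : Ω → ℝ := fun ω => (Real.log r)⁻¹ * (θ0 ω * max (Real.log (θ0 ω)) 0) + θ0 ω with hg
  have hgint : Integrable g ℙ := (hlog.const_mul _).add hint
  have hgnn : 0 ≤ᵐ[ℙ] g := ae_of_all _ fun ω => by
    have := hpos ω
    have h1 : 0 ≤ max (Real.log (θ0 ω)) 0 := le_max_right _ _
    have h2 : 0 ≤ (Real.log r)⁻¹ := inv_nonneg.2 hL.le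
    positivity
  have hptwise : ∀ ω, (∑' n : ℕ, ENNReal.ofReal (trψ (r ^ n) (θ0 ω))) ≤ ENNReal.ofReal (g ω) := by
    intro ω
    have hx0 : 0 < θ0 ω := hpos ω
    set x := θ0 ω with hx
    set N : ℕ := ⌊max (Real.log x) 0 / Real.log r⌋₊ with hN
    have hvanish : ∀ n ∉ Finset.range (N + 1), ENNReal.ofReal (trψ (r ^ n) x) = 0 := by
      intro n hn
      simp only [Finset.mem_range, not_lt] at hn
      have hxle : x ≤ r ^ n := by
        have h1 : max (Real.log x) 0 / Real.log r < (N : ℝ) + 1 := Nat.lt_floor_add_one _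
        have h2 : ((N : ℝ) + 1) ≤ (n : ℝ) := by exact_mod_cast hn
        have h3 : max (Real.log x) 0 < (n : ℝ) * Real.log r := by
          have := mul_lt_mul_of_pos_right h1 hL
          rw [div_mul_cancel₀ _ hL.ne'] at this
          calc max (Real.log x) 0 < ((N : ℝ) + 1) * Real.log r := this
            _ ≤ (n : ℝ) * Real.log r := mul_le_mul_of_nonneg_right h2 hL.le
        have h4 : Real.log x < Real.log (r ^ n) := by
          rw [Real.log_pow]
          exact lt_of_le_of_lt (le_max_left _ _) h3
        exact le_of_lt ((Real.log_lt_log_iff hx0 (pow_pos hr0 n)).1 h4)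
      have : trψ (r ^ n) x = 0 := by unfold trψ; simp [hxle]
      simp [this]
    rw [tsum_eq_sum hvanish]
    have hterm : ∀ n ∈ Finset.range (N + 1),
        ENNReal.ofReal (trψ (r ^ n) x) ≤ ENNReal.ofReal x := by
      intro n _
      apply ENNReal.ofReal_le_ofReal
      exact trψ_le _ _ hx0
    calc (∑ n ∈ Finset.range (N + 1), ENNReal.ofReal (trψ (r ^ n) x))
        ≤ ∑ _n ∈ Finset.range (N + 1), ENNReal.ofReal x := Finset.sum_le_sum hterm
      _ = ((N + 1 : ℕ) : ℝ≥0∞) * ENNReal.ofReal x := by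
          rw [Finset.sum_const, Finset.card_range, nsmul_eq_mul]
      _ = ENNReal.ofReal (((N + 1 : ℕ) : ℝ) * x) := by
          rw [ENNReal.ofReal_mul (by positivity), ENNReal.ofReal_natCast]
      _ ≤ ENNReal.ofReal (g ω) := by
          apply ENNReal.ofReal_le_ofReal
          have hNle : (N : ℝ) * Real.log r ≤ max (Real.log x) 0 := by
            rw [← le_div_iff₀ hL]
            exact Nat.floor_le (by positivity)
          have h5 : (N : ℝ) * x ≤ (Real.log r)⁻¹ * (x * max (Real.log x) 0) := by
            have h6 := mul_le_mul_of_nonneg_right hNle hx0.le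
            have h7 := mul_le_mul_of_nonneg_left h6 (inv_nonneg.2 hL.le)
            calc (N : ℝ) * x = (Real.log r)⁻¹ * ((N : ℝ) * Real.log r * x) := by
                  field_simp
              _ ≤ (Real.log r)⁻¹ * (max (Real.log x) 0 * x) := h7
              _ = (Real.log r)⁻¹ * (x * max (Real.log x) 0) := by ring
          have : ((N + 1 : ℕ) : ℝ) * x = (N : ℝ) * x + x := by push_cast; ring
          rw [this, hg]
          simp only [← hx]
          linarith
  have hkey : (∑' n : ℕ, ENNReal.ofReal (∫ ω, trψ (r ^ n) (θ0 ω))) ≠ ⊤ := by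
    have h1 : ∀ n : ℕ, ENNReal.ofReal (∫ ω, trψ (r ^ n) (θ0 ω))
        = ∫⁻ ω, ENNReal.ofReal (trψ (r ^ n) (θ0 ω)) ∂ℙ :=
      fun n => ofReal_integral_eq_lintegral_ofReal (hψint n) (ae_of_all _ (hψnn n))
    simp_rw [h1]
    rw [← lintegral_tsum (f := fun (n:ℕ) ω => ENNReal.ofReal (trψ (r ^ n) (θ0 ω))) fun n => (hψm n).ennreal_ofReal]
    have h2 : (∫⁻ ω, ∑' n : ℕ, ENNReal.ofReal (trψ (r ^ n) (θ0 ω)) ∂ℙ)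
        ≤ ∫⁻ ω, ENNReal.ofReal (g ω) ∂ℙ := lintegral_mono hptwise
    have h3 : (∫⁻ ω, ENNReal.ofReal (g ω) ∂ℙ) < ⊤ := by
      rw [← ofReal_integral_eq_lintegral_ofReal hgint hgnn]
      exact ENNReal.ofReal_lt_top
    exact (lt_of_le_of_lt h2 h3).ne
  have := ENNReal.summable_toReal hkey
  exact this.congr fun n => ENNReal.toReal_ofReal (integral_nonneg (hψnn n))

set_option maxHeartbeats 1000000 in
/-- The single-row estimate: a dominating variable `W` with controlled expectation, bounding
the deviation of the random walk from its mean uniformly over `k ≤ K`. -/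
private lemma row_est {Ω : Type*} [MeasureSpace Ω] [IsProbabilityMeasure (ℙ : Measure Ω)]
    (X : ℕ → Ω → ℝ) (hXm : ∀ i, Measurable (X i))
    (hXind : ∀ i j, i ≠ j → IndepFun (X i) (X j) ℙ)
    (X0 : Ω → ℝ) (hid : ∀ i, IdentDistrib (X i) X0 ℙ ℙ)
    (hpos : ∀ ω, 0 < X0 ω) (hint : Integrable X0)
    (μ : ℝ) (hμdef : μ = ∫ ω, X0 ω)
    (c ε : ℝ) (hc : 1 ≤ c) (hε : 0 < ε) (q M K : ℕ) (hq : 0 < q) (hKM : K / q + 1 ≤ M) :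
    ∃ W : Ω → ℝ, Integrable W ℙ ∧ (0 ≤ᵐ[ℙ] W) ∧
      ((∫ ω, W ω) ≤ ε / 2 + (2 * ε)⁻¹ * (((M : ℝ) + 1) * (((M * q : ℕ) : ℝ) * (c * μ)))
          + 2 * ((M * q : ℕ) : ℝ) * (∫ ω, trψ c (X0 ω))) ∧
      ∀ᵐ ω ∂ℙ, ∀ k ≤ K,
        |(∑ i ∈ Finset.range k, X i ω) - (k : ℝ) * μ| ≤ W ω + (q : ℝ) * μ := by
  have hθ0m : AEMeasurable X0 ℙ := hint.aemeasurable
  have hc0 : (0 : ℝ) < c := lt_of_lt_of_le one_pos hc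
  set Eφ := ∫ ω, trφ c (X0 ω) with hEφdef
  set Eψ := ∫ ω, trψ c (X0 ω) with hEψdef
  have hφ0m : AEMeasurable (fun ω => trφ c (X0 ω)) ℙ := (trφ_meas c).comp_aemeasurable hθ0m
  have hψ0m : AEMeasurable (fun ω => trψ c (X0 ω)) ℙ := (trψ_meas c).comp_aemeasurable hθ0m
  have hφ0int : Integrable (fun ω => trφ c (X0 ω)) ℙ :=
    hint.mono hφ0m.aestronglyMeasurable (ae_of_all _ fun ω => by
      rw [Real.norm_eq_abs, Real.norm_eq_abs, abs_of_nonneg (trφ_nonneg _ _ (hpos ω)),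
        abs_of_pos (hpos ω)]
      exact trφ_le _ _ (hpos ω))
  have hψ0int : Integrable (fun ω => trψ c (X0 ω)) ℙ :=
    hint.mono hψ0m.aestronglyMeasurable (ae_of_all _ fun ω => by
      rw [Real.norm_eq_abs, Real.norm_eq_abs, abs_of_nonneg (trψ_nonneg _ _ (hpos ω)),
        abs_of_pos (hpos ω)]
      exact trψ_le _ _ (hpos ω))
  have hEμ : Eφ + Eψ = μ := by
    rw [hEφdef, hEψdef, ← integral_add hφ0int hψ0int, hμdef]
    congr 1
    funext ω
    exact trφ_add_trψ c (X0 ω)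
  have hEφnn : 0 ≤ Eφ := integral_nonneg fun ω => trφ_nonneg _ _ (hpos ω)
  have hEψnn : 0 ≤ Eψ := integral_nonneg fun ω => trψ_nonneg _ _ (hpos ω)
  have hμnn : 0 ≤ μ := by rw [hμdef]; exact integral_nonneg fun ω => (hpos ω).le
  -- MemLp 2 for truncated variables
  have hφ0mem : MemLp (fun ω => trφ c (X0 ω)) 2 ℙ := by
    refine (memLp_top_of_bound hφ0m.aestronglyMeasurable c (ae_of_all _ fun ω => ?_)).mono_exponent le_top
    rw [Real.norm_eq_abs, abs_of_nonneg (trφ_nonneg _ _ (hpos ω))]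
    exact trφ_le_c _ _ hc0.le
  have hφidd : ∀ i, IdentDistrib (fun ω => trφ c (X i ω)) (fun ω => trφ c (X0 ω)) ℙ ℙ :=
    fun i => (hid i).comp (trφ_meas c)
  have hψidd : ∀ i, IdentDistrib (fun ω => trψ c (X i ω)) (fun ω => trψ c (X0 ω)) ℙ ℙ :=
    fun i => (hid i).comp (trψ_meas c)
  have hφmem : ∀ i, MemLp (fun ω => trφ c (X i ω)) 2 ℙ := fun i =>
    (hφidd i).symm.memLp_snd hφ0mem
  have hφint : ∀ i, Integrable (fun ω => trφ c (X i ω)) ℙ := fun i =>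
    (hφidd i).symm.integrable_snd hφ0int
  have hψint : ∀ i, Integrable (fun ω => trψ c (X i ω)) ℙ := fun i =>
    (hψidd i).symm.integrable_snd hψ0int
  -- variance bound
  set V := variance (fun ω => trφ c (X0 ω)) ℙ with hVdef
  have hVnn : 0 ≤ V := variance_nonneg _ _
  have hVle : V ≤ c * μ := by
    refine le_trans (variance_le_expectation_sq hφ0m.aestronglyMeasurable) ?_
    have hsq : Integrable (fun ω => (trφ c (X0 ω)) ^ 2) ℙ := hφ0mem.integrable_sq
    have hmono : (∫ ω, (trφ c (X0 ω)) ^ 2) ≤ ∫ ω, c * X0 ω := by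
      refine integral_mono hsq (hint.const_mul c) fun ω => ?_
      have hx := hpos ω
      unfold trφ
      split
      · next h => nlinarith
      · nlinarith
    calc (∫ ω, ((fun ω => trφ c (X0 ω)) ^ 2) ω ∂ℙ) = ∫ ω, (trφ c (X0 ω)) ^ 2 := by
          simp [Pi.pow_apply]
      _ ≤ ∫ ω, c * X0 ω := hmono
      _ = c * μ := by rw [integral_const_mul, hμdef]
  -- partial sums of the truncated variables
  set Sφ : ℕ → Ω → ℝ := fun k ω => ∑ i ∈ Finset.range k, trφ c (X i ω) with hSφdef
  have hSφeq : ∀ k : ℕ, Sφ k = ∑ i ∈ Finset.range k, (fun ω => trφ c (X i ω)) := by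
    intro k
    funext ω
    rw [hSφdef]
    simp [Finset.sum_apply]
  have hSφmem : ∀ k, MemLp (Sφ k) 2 ℙ := fun k => by
    rw [hSφeq k]
    exact memLp_finset_sum' _ fun i _ => hφmem i
  have hISφ : ∀ k : ℕ, ∫ ω, Sφ k ω = (k : ℝ) * Eφ := by
    intro k
    rw [hSφdef]
    rw [integral_finset_sum _ fun i _ => hφint i]
    rw [Finset.sum_congr rfl fun i _ => ((hφidd i).integral_eq : _)]
    rw [Finset.sum_const, Finset.card_range, nsmul_eq_mul]
  have hVarSφ : ∀ k : ℕ, variance (Sφ k) ℙ = (k : ℝ) * V := by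
    intro k
    rw [hSφeq k]
    rw [IndepFun.variance_sum (fun i _ => hφmem i)
      (fun i _ j _ hij => ((hXind i j hij).comp (trφ_meas c) (trφ_meas c)))]
    rw [Finset.sum_congr rfl fun i _ => ((hφidd i).variance_eq : _)]
    rw [Finset.sum_const, Finset.card_range, nsmul_eq_mul]
  have hIYsq : ∀ k : ℕ, ∫ ω, (Sφ k ω - (k : ℝ) * Eφ) ^ 2 = (k : ℝ) * V := by
    intro k
    have h1 := variance_eq_integral (hSφmem k).aestronglyMeasurable.aemeasurable
    rw [hVarSφ k] at h1
    rw [hISφ k] at h1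
    rw [h1]
  -- define W
  refine ⟨fun ω => ε / 2
      + (2 * ε)⁻¹ * (∑ j ∈ Finset.range (M + 1), (Sφ (j * q) ω - ((j * q : ℕ) : ℝ) * Eφ) ^ 2)
      + (∑ i ∈ Finset.range (M * q), trψ c (X i ω)) + ((M * q : ℕ) : ℝ) * Eψ, ?_, ?_, ?_, ?_⟩
  · -- integrability
    have h1 : ∀ j : ℕ, Integrable (fun ω => (Sφ (j * q) ω - ((j * q : ℕ) : ℝ) * Eφ) ^ 2) ℙ := by
      intro j
      have := ((hSφmem (j * q)).sub (memLp_const (((j * q : ℕ) : ℝ) * Eφ))).integrable_sq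
      apply this.congr
      filter_upwards with ω
      simp [Pi.sub_apply]
    exact ((((integrable_const _).add
      ((integrable_finset_sum _ fun j _ => h1 j).const_mul _)).add
      (integrable_finset_sum _ fun i _ => hψint i)).add (integrable_const _))
  · -- a.e. nonneg
    have haepos : ∀ᵐ ω ∂ℙ, ∀ i, 0 < X i ω := by
      rw [ae_all_iff]
      intro i
      have h0 : ℙ (X i ⁻¹' Set.Iic 0) = 0 := by
        rw [(hid i).measure_mem_eq measurableSet_Iic]
        have : X0 ⁻¹' Set.Iic 0 = ∅ := by
          ext ω; simp [Set.mem_preimage, not_le.2 (hpos ω)]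
        simp [this]
      rw [ae_iff]
      convert h0 using 2
      ext ω
      simp [Set.mem_preimage, not_lt]
    filter_upwards [haepos] with ω hω
    have h1 : 0 ≤ ∑ j ∈ Finset.range (M + 1), (Sφ (j * q) ω - ((j * q : ℕ) : ℝ) * Eφ) ^ 2 :=
      Finset.sum_nonneg fun j _ => sq_nonneg _
    have h2 : 0 ≤ ∑ i ∈ Finset.range (M * q), trψ c (X i ω) :=
      Finset.sum_nonneg fun i _ => trψ_nonneg _ _ (hω i)
    have h3 : 0 ≤ (2 * ε)⁻¹ := inv_nonneg.2 (by linarith)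
    have h4 : 0 ≤ ((M * q : ℕ) : ℝ) * Eψ := mul_nonneg (Nat.cast_nonneg _) hEψnn
    simp only [Pi.zero_apply]
    nlinarith [mul_nonneg h3 h1, hε]
  · -- expectation bound
    have hψsum : (∫ ω, ∑ i ∈ Finset.range (M * q), trψ c (X i ω)) = ((M * q : ℕ) : ℝ) * Eψ := by
      rw [integral_finset_sum _ fun i _ => hψint i]
      rw [Finset.sum_congr rfl fun i _ => ((hψidd i).integral_eq : _)]
      rw [Finset.sum_const, Finset.card_range, nsmul_eq_mul]
    have hsqsum : (∫ ω, ∑ j ∈ Finset.range (M + 1),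
        (Sφ (j * q) ω - ((j * q : ℕ) : ℝ) * Eφ) ^ 2)
        = ∑ j ∈ Finset.range (M + 1), ((j * q : ℕ) : ℝ) * V := by
      rw [integral_finset_sum _ fun j _ => by
        have := ((hSφmem (j * q)).sub (memLp_const (((j * q : ℕ) : ℝ) * Eφ))).integrable_sq
        apply this.congr
        filter_upwards with ω
        simp [Pi.sub_apply]]
      exact Finset.sum_congr rfl fun j _ => hIYsq (j * q)
    have h1 : ∀ j : ℕ, Integrable (fun ω => (Sφ (j * q) ω - ((j * q : ℕ) : ℝ) * Eφ) ^ 2) ℙ := by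
      intro j
      have := ((hSφmem (j * q)).sub (memLp_const (((j * q : ℕ) : ℝ) * Eφ))).integrable_sq
      apply this.congr
      filter_upwards with ω
      simp [Pi.sub_apply]
    have hAint : Integrable (fun ω => (2 * ε)⁻¹ * ∑ j ∈ Finset.range (M + 1),
        (Sφ (j * q) ω - ((j * q : ℕ) : ℝ) * Eφ) ^ 2) ℙ :=
      (integrable_finset_sum _ fun j _ => h1 j).const_mul _
    have hBint : Integrable (fun ω => ∑ i ∈ Finset.range (M * q), trψ c (X i ω)) ℙ :=
      integrable_finset_sum _ fun i _ => hψint i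
    have hCint : Integrable (fun ω => ε / 2 + (2 * ε)⁻¹ * ∑ j ∈ Finset.range (M + 1),
        (Sφ (j * q) ω - ((j * q : ℕ) : ℝ) * Eφ) ^ 2) ℙ := (integrable_const _).add hAint
    have h3int : Integrable (fun ω => ε / 2 + (2 * ε)⁻¹ * (∑ j ∈ Finset.range (M + 1),
        (Sφ (j * q) ω - ((j * q : ℕ) : ℝ) * Eφ) ^ 2)
        + (∑ i ∈ Finset.range (M * q), trψ c (X i ω))) ℙ := hCint.add hBint
    have e1 : (∫ ω, (ε / 2 + (2 * ε)⁻¹ * (∑ j ∈ Finset.range (M + 1),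
          (Sφ (j * q) ω - ((j * q : ℕ) : ℝ) * Eφ) ^ 2)
          + (∑ i ∈ Finset.range (M * q), trψ c (X i ω)) + ((M * q : ℕ) : ℝ) * Eψ))
        = (∫ ω, (ε / 2 + (2 * ε)⁻¹ * (∑ j ∈ Finset.range (M + 1),
          (Sφ (j * q) ω - ((j * q : ℕ) : ℝ) * Eφ) ^ 2)
          + (∑ i ∈ Finset.range (M * q), trψ c (X i ω))))
          + ∫ _ω : Ω, (((M * q : ℕ) : ℝ) * Eψ) := integral_add h3int (integrable_const _)
    have e2 : (∫ ω, (ε / 2 + (2 * ε)⁻¹ * (∑ j ∈ Finset.range (M + 1),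
          (Sφ (j * q) ω - ((j * q : ℕ) : ℝ) * Eφ) ^ 2)
          + (∑ i ∈ Finset.range (M * q), trψ c (X i ω))))
        = (∫ ω, (ε / 2 + (2 * ε)⁻¹ * (∑ j ∈ Finset.range (M + 1),
          (Sφ (j * q) ω - ((j * q : ℕ) : ℝ) * Eφ) ^ 2)))
          + ∫ ω, (∑ i ∈ Finset.range (M * q), trψ c (X i ω)) := integral_add hCint hBint
    have e3 : (∫ ω, (ε / 2 + (2 * ε)⁻¹ * (∑ j ∈ Finset.range (M + 1),
          (Sφ (j * q) ω - ((j * q : ℕ) : ℝ) * Eφ) ^ 2)))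
        = (∫ _ω : Ω, (ε / 2 : ℝ)) + ∫ ω, ((2 * ε)⁻¹ * ∑ j ∈ Finset.range (M + 1),
          (Sφ (j * q) ω - ((j * q : ℕ) : ℝ) * Eφ) ^ 2) := integral_add (integrable_const _) hAint
    have e4 : (∫ ω, ((2 * ε)⁻¹ * ∑ j ∈ Finset.range (M + 1),
        (Sφ (j * q) ω - ((j * q : ℕ) : ℝ) * Eφ) ^ 2))
        = (2 * ε)⁻¹ * ∑ j ∈ Finset.range (M + 1), ((j * q : ℕ) : ℝ) * V := by
      rw [integral_const_mul, hsqsum]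
    have e5 : (∫ _ω : Ω, (ε / 2 : ℝ)) = ε / 2 := by
      simp [integral_const, measure_univ]
    have e6 : (∫ _ω : Ω, (((M * q : ℕ) : ℝ) * Eψ)) = ((M * q : ℕ) : ℝ) * Eψ := by
      simp [integral_const, measure_univ]
    rw [e1, e2, e3, e4, e5, e6, hψsum]
    have hbound : (∑ j ∈ Finset.range (M + 1), ((j * q : ℕ) : ℝ) * V)
        ≤ ((M : ℝ) + 1) * (((M * q : ℕ) : ℝ) * (c * μ)) := by
      have hterm : ∀ j ∈ Finset.range (M + 1),
          ((j * q : ℕ) : ℝ) * V ≤ ((M * q : ℕ) : ℝ) * (c * μ) := by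
        intro j hj
        rw [Finset.mem_range] at hj
        have hjM : j ≤ M := Nat.lt_succ_iff.1 hj
        have hcast : ((j * q : ℕ) : ℝ) ≤ ((M * q : ℕ) : ℝ) := by
          exact_mod_cast Nat.mul_le_mul_right q hjM
        exact mul_le_mul hcast hVle hVnn (Nat.cast_nonneg _)
      calc (∑ j ∈ Finset.range (M + 1), ((j * q : ℕ) : ℝ) * V)
          ≤ ∑ _j ∈ Finset.range (M + 1), ((M * q : ℕ) : ℝ) * (c * μ) :=
            Finset.sum_le_sum hterm
        _ = ((M : ℝ) + 1) * (((M * q : ℕ) : ℝ) * (c * μ)) := by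
            rw [Finset.sum_const, Finset.card_range, nsmul_eq_mul]
            push_cast
            ring
    have h3 : 0 ≤ (2 * ε)⁻¹ := inv_nonneg.2 (by linarith)
    have := mul_le_mul_of_nonneg_left hbound h3
    linarith
  · -- a.e. uniform bound
    have haepos : ∀ᵐ ω ∂ℙ, ∀ i, 0 < X i ω := by
      rw [ae_all_iff]
      intro i
      have h0 : ℙ (X i ⁻¹' Set.Iic 0) = 0 := by
        rw [(hid i).measure_mem_eq measurableSet_Iic]
        have : X0 ⁻¹' Set.Iic 0 = ∅ := by
          ext ω; simp [Set.mem_preimage, not_le.2 (hpos ω)]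
        simp [this]
      rw [ae_iff]
      convert h0 using 2
      ext ω
      simp [Set.mem_preimage, not_lt]
    filter_upwards [haepos] with ω hω
    intro k hk
    set Sθ : ℕ → ℝ := fun a => ∑ i ∈ Finset.range a, X i ω with hSθdef
    set Sψ : ℕ → ℝ := fun a => ∑ i ∈ Finset.range a, trψ c (X i ω) with hSψdef
    set Wω : ℝ := ε / 2
      + (2 * ε)⁻¹ * (∑ j ∈ Finset.range (M + 1), (Sφ (j * q) ω - ((j * q : ℕ) : ℝ) * Eφ) ^ 2)
      + Sψ (M * q) + ((M * q : ℕ) : ℝ) * Eψ with hWωdef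
    have hdecomp : ∀ a : ℕ, Sθ a = Sφ a ω + Sψ a := by
      intro a
      rw [hSθdef, hSφdef, hSψdef, ← Finset.sum_add_distrib]
      exact Finset.sum_congr rfl fun i _ => (trφ_add_trψ c (X i ω)).symm
    have hSψmono : ∀ a b : ℕ, a ≤ b → Sψ a ≤ Sψ b := by
      intro a b hab
      apply Finset.sum_le_sum_of_subset_of_nonneg (Finset.range_subset_range.2 hab)
      intro i _ _
      exact trψ_nonneg _ _ (hω i)
    have hSθmono : ∀ a b : ℕ, a ≤ b → Sθ a ≤ Sθ b := by
      intro a b hab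
      apply Finset.sum_le_sum_of_subset_of_nonneg (Finset.range_subset_range.2 hab)
      intro i _ _
      exact (hω i).le
    -- lem1 : deviation at grid points
    have lem1 : ∀ j' : ℕ, j' ≤ M → |Sθ (j' * q) - ((j' * q : ℕ) : ℝ) * μ| ≤ Wω := by
      intro j' hj'
      have h1 : Sθ (j' * q) - ((j' * q : ℕ) : ℝ) * μ
          = (Sφ (j' * q) ω - ((j' * q : ℕ) : ℝ) * Eφ) + (Sψ (j' * q) - ((j' * q : ℕ) : ℝ) * Eψ) := by
        rw [hdecomp, ← hEμ]; ring
      rw [h1]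
      have h2 : |Sφ (j' * q) ω - ((j' * q : ℕ) : ℝ) * Eφ|
          ≤ ε / 2 + (2 * ε)⁻¹ * (∑ j ∈ Finset.range (M + 1),
            (Sφ (j * q) ω - ((j * q : ℕ) : ℝ) * Eφ) ^ 2) := by
        refine le_trans (abs_le_eps _ ε hε) ?_
        have hsingle : (Sφ (j' * q) ω - ((j' * q : ℕ) : ℝ) * Eφ) ^ 2
            ≤ ∑ j ∈ Finset.range (M + 1), (Sφ (j * q) ω - ((j * q : ℕ) : ℝ) * Eφ) ^ 2 :=
          Finset.single_le_sum (f := fun j => (Sφ (j * q) ω - ((j * q : ℕ) : ℝ) * Eφ) ^ 2)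
            (fun j _ => sq_nonneg _) (Finset.mem_range.2 (Nat.lt_succ_of_le hj'))
        have h3 : 0 ≤ (2 * ε)⁻¹ := inv_nonneg.2 (by linarith)
        have := mul_le_mul_of_nonneg_left hsingle h3
        linarith
      have h4 : |Sψ (j' * q) - ((j' * q : ℕ) : ℝ) * Eψ| ≤ Sψ (M * q) + ((M * q : ℕ) : ℝ) * Eψ := by
        have h5 : 0 ≤ Sψ (j' * q) := Finset.sum_nonneg fun i _ => trψ_nonneg _ _ (hω i)
        have h6 : 0 ≤ ((j' * q : ℕ) : ℝ) * Eψ := mul_nonneg (Nat.cast_nonneg _) hEψnn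
        have h7 : Sψ (j' * q) ≤ Sψ (M * q) := hSψmono _ _ (Nat.mul_le_mul_right q hj')
        have h8 : ((j' * q : ℕ) : ℝ) * Eψ ≤ ((M * q : ℕ) : ℝ) * Eψ := by
          apply mul_le_mul_of_nonneg_right _ hEψnn
          exact_mod_cast Nat.mul_le_mul_right q hj'
        rw [abs_sub_comm]
        calc |((j' * q : ℕ) : ℝ) * Eψ - Sψ (j' * q)| ≤ ((j' * q : ℕ) : ℝ) * Eψ + Sψ (j' * q) := by
              rw [abs_sub_le_iff]
              constructor <;> linarith
          _ ≤ Sψ (M * q) + ((M * q : ℕ) : ℝ) * Eψ := by linarith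
      calc |(Sφ (j' * q) ω - ((j' * q : ℕ) : ℝ) * Eφ) + (Sψ (j' * q) - ((j' * q : ℕ) : ℝ) * Eψ)|
          ≤ |Sφ (j' * q) ω - ((j' * q : ℕ) : ℝ) * Eφ| + |Sψ (j' * q) - ((j' * q : ℕ) : ℝ) * Eψ| :=
            abs_add_le _ _
        _ ≤ Wω := by rw [hWωdef]; linarith
    -- chaining
    set j : ℕ := k / q with hjdef
    have hj1 : j * q ≤ k := by rw [hjdef]; exact Nat.div_mul_le_self k q
    have hj2 : k < (j + 1) * q := by
      rw [hjdef]
      calc k = q * (k / q) + k % q := (Nat.div_add_mod k q).symm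
        _ < q * (k / q) + q := Nat.add_lt_add_left (Nat.mod_lt k hq) _
        _ = (k / q + 1) * q := by ring
    have hjM : j + 1 ≤ M := by
      rw [hjdef]
      calc k / q + 1 ≤ K / q + 1 := Nat.add_le_add_right (Nat.div_le_div_right hk) 1
        _ ≤ M := hKM
    have hjM' : j ≤ M := le_trans (Nat.le_succ j) hjM
    have hcast1 : (((j + 1) * q : ℕ) : ℝ) = ((j * q : ℕ) : ℝ) + (q : ℝ) := by push_cast; ring
    have hup : Sθ k - (k : ℝ) * μ ≤ Wω + (q : ℝ) * μ := by
      have h1 : Sθ k ≤ Sθ ((j + 1) * q) := hSθmono _ _ hj2.le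
      have h2 : ((j * q : ℕ) : ℝ) * μ ≤ (k : ℝ) * μ :=
        mul_le_mul_of_nonneg_right (by exact_mod_cast hj1) hμnn
      have h3 := lem1 (j + 1) hjM
      have h4 : Sθ ((j + 1) * q) - (((j + 1) * q : ℕ) : ℝ) * μ ≤ Wω :=
        le_trans (le_abs_self _) h3
      have h5 : (((j + 1) * q : ℕ) : ℝ) * μ = ((j * q : ℕ) : ℝ) * μ + (q : ℝ) * μ := by
        rw [hcast1]; ring
      linarith
    have hlow : (k : ℝ) * μ - Sθ k ≤ Wω + (q : ℝ) * μ := by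
      have h1 : Sθ (j * q) ≤ Sθ k := hSθmono _ _ hj1
      have h2 : (k : ℝ) * μ ≤ (((j + 1) * q : ℕ) : ℝ) * μ := by
        apply mul_le_mul_of_nonneg_right _ hμnn
        exact_mod_cast hj2.le
      have h3 := lem1 j hjM'
      have h4 : ((j * q : ℕ) : ℝ) * μ - Sθ (j * q) ≤ Wω := by
        have h4a := neg_le_abs (Sθ (j * q) - ((j * q : ℕ) : ℝ) * μ)
        linarith
      have h5 : (((j + 1) * q : ℕ) : ℝ) * μ = ((j * q : ℕ) : ℝ) * μ + (q : ℝ) * μ := by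
        rw [hcast1]; ring
      linarith
    rw [abs_le]
    constructor <;> [linarith; linarith]

set_option maxHeartbeats 2000000 in
theorem stmt3 {Ω : Type*} [MeasureSpace Ω] [IsProbabilityMeasure (ℙ : Measure Ω)]
    (θ : ℕ × ℕ → Ω → ℝ) (hmeas : ∀ p, Measurable (θ p))
    (hindep : iIndepFun θ ℙ)
    (θ0 : Ω → ℝ) (hident : ∀ p, IdentDistrib (θ p) θ0 ℙ ℙ)
    (hpos : ∀ ω, 0 < θ0 ω) (hint : Integrable θ0)
    (μ : ℝ) (hμ : μ = ∫ ω, θ0 ω) (hμgt : 1 < μ)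
    (hlog : Integrable (fun ω => θ0 ω * max (Real.log (θ0 ω)) 0)) :
    ∀ T : ℝ, 0 < T → ∀ᵐ ω ∂ℙ,
      Summable (fun n : ℕ =>
        ⨆ t : Set.Icc (0 : ℝ) T,
          |(μ ^ (n + 1))⁻¹ * (∑ i ∈ Finset.range ⌊(t : ℝ) * μ ^ n⌋₊, θ (n + 1, i) ω)
            - (t : ℝ)|) := by
  intro T hT
  have hμpos : (0 : ℝ) < μ := lt_trans one_pos hμgt
  set b : ℝ := μ ^ ((8 : ℝ)⁻¹) with hbdef
  have hb1 : 1 < b := by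
    rw [hbdef]
    exact (Real.one_lt_rpow_iff_of_pos hμpos).2 (Or.inl ⟨hμgt, by norm_num⟩)
  have hb0 : (0 : ℝ) < b := lt_trans one_pos hb1
  have hb8 : b ^ (8 : ℕ) = μ := by
    rw [hbdef, ← Real.rpow_natCast (μ ^ ((8 : ℝ)⁻¹)) 8, ← Real.rpow_mul hμpos.le]
    norm_num
  set q : ℕ → ℕ := fun n => ⌈b ^ (4 * n)⌉₊ with hqdef
  set K : ℕ → ℕ := fun n => ⌊T * μ ^ n⌋₊ with hKdef
  set M : ℕ → ℕ := fun n => K n / q n + 1 with hMdef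
  set Eψ : ℕ → ℝ := fun n => ∫ ω, trψ (b ^ (2 * n)) (θ0 ω) with hEψdef
  have hq0 : ∀ n, 0 < q n := fun n => Nat.ceil_pos.2 (by positivity)
  have hEψnn : ∀ n, 0 ≤ Eψ n := fun n =>
    integral_nonneg fun ω => trψ_nonneg _ _ (hpos ω)
  -- apply the row estimate to each row
  have hrow : ∀ n : ℕ, ∃ W : Ω → ℝ, Integrable W ℙ ∧ (0 ≤ᵐ[ℙ] W) ∧
      ((∫ ω, W ω) ≤ (b ^ (7 * n)) / 2
        + (2 * b ^ (7 * n))⁻¹ * (((M n : ℝ) + 1) * (((M n * q n : ℕ) : ℝ) * (b ^ (2 * n) * μ)))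
        + 2 * ((M n * q n : ℕ) : ℝ) * Eψ n) ∧
      ∀ᵐ ω ∂ℙ, ∀ k ≤ K n,
        |(∑ i ∈ Finset.range k, θ (n + 1, i) ω) - (k : ℝ) * μ| ≤ W ω + (q n : ℝ) * μ := by
    intro n
    exact row_est (fun i => θ (n + 1, i)) (fun i => hmeas _)
      (fun i j hij => hindep.indepFun (show ((n+1 : ℕ), i) ≠ ((n+1 : ℕ), j) by simpa using hij))
      θ0 (fun i => hident _) hpos hint μ hμ
      (b ^ (2 * n)) (b ^ (7 * n)) (one_le_pow₀ hb1.le) (by positivity)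
      (q n) (M n) (K n) (hq0 n) le_rfl
  choose W hWint hWnn hWle hWae using hrow
  set Z : ℕ → Ω → ℝ := fun n ω => (μ ^ (n + 1))⁻¹ * (W n ω + (q n : ℝ) * μ) with hZdef
  have hZint : ∀ n, Integrable (Z n) ℙ := fun n =>
    (((hWint n).add (integrable_const _)).const_mul _)
  have hZnn : ∀ n, 0 ≤ᵐ[ℙ] Z n := by
    intro n
    filter_upwards [hWnn n] with ω hω
    simp only [Pi.zero_apply] at hω ⊢
    have h1 : (0 : ℝ) ≤ (μ ^ (n + 1))⁻¹ := inv_nonneg.2 (pow_nonneg hμpos.le _)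
    have h2 : (0 : ℝ) ≤ (q n : ℝ) * μ := mul_nonneg (Nat.cast_nonneg _) hμpos.le
    exact mul_nonneg h1 (by linarith)
  -- the deterministic bound
  set D : ℕ → ℝ := fun n => (μ ^ (n + 1))⁻¹ * (((b ^ (7 * n)) / 2
    + (2 * b ^ (7 * n))⁻¹ * (((M n : ℝ) + 1) * (((M n * q n : ℕ) : ℝ) * (b ^ (2 * n) * μ)))
    + 2 * ((M n * q n : ℕ) : ℝ) * Eψ n) + (q n : ℝ) * μ) with hDdef
  have hZleD : ∀ n, ∫ ω, Z n ω ≤ D n := by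
    intro n
    simp only [hZdef, hDdef]
    rw [integral_const_mul, integral_add (hWint n) (integrable_const _)]
    simp only [integral_const, measure_univ, probReal_univ, ENNReal.toReal_one, smul_eq_mul, one_mul]
    have h1 : (0 : ℝ) ≤ (μ ^ (n + 1))⁻¹ := inv_nonneg.2 (pow_nonneg hμpos.le _)
    exact mul_le_mul_of_nonneg_left (by linarith [hWle n]) h1
  -- bound D by a summable sequence
  set C1 : ℝ := (2 * μ)⁻¹ + (T + 2) * (T + 1) + 2 with hC1def
  set C2 : ℝ := 4 * (T + 1) / μ with hC2def
  have hDle : ∀ n, D n ≤ C1 * (b⁻¹) ^ n + C2 * Eψ n := by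
    intro n
    set P : ℝ := b ^ n with hPdef
    have hP0 : 0 < P := pow_pos hb0 n
    have hP1 : 1 ≤ P := one_le_pow₀ hb1.le
    have h14 : (1:ℝ) ≤ P ^ 4 := one_le_pow₀ hP1
    have hP2 : b ^ (2 * n) = P ^ 2 := by rw [hPdef, ← pow_mul, Nat.mul_comm n 2]
    have hP4 : b ^ (4 * n) = P ^ 4 := by rw [hPdef, ← pow_mul, Nat.mul_comm n 4]
    have hP7 : b ^ (7 * n) = P ^ 7 := by rw [hPdef, ← pow_mul, Nat.mul_comm n 7]
    have hP8 : μ ^ n = P ^ 8 := by rw [hPdef, ← hb8, ← pow_mul, ← pow_mul, Nat.mul_comm n 8]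
    have hPinv : (b⁻¹) ^ n = P⁻¹ := by rw [hPdef, inv_pow]
    have hq_lb : P ^ 4 ≤ (q n : ℝ) := by
      simp only [hqdef, ← hP4]
      exact Nat.le_ceil _
    have hq_ub : (q n : ℝ) ≤ 2 * P ^ 4 := by
      simp only [hqdef]
      have hcl := Nat.ceil_lt_add_one (show (0:ℝ) ≤ b ^ (4*n) by positivity)
      have h2 : b ^ (4*n) + 1 ≤ 2 * P ^ 4 := by rw [hP4]; linarith
      linarith
    have hK_ub : (K n : ℝ) ≤ T * P ^ 8 := by
      simp only [hKdef, ← hP8]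
      exact Nat.floor_le (by positivity)
    have hM_ub : (M n : ℝ) ≤ (T + 1) * P ^ 4 := by
      simp only [hMdef]
      push_cast
      have h1 : ((K n / q n : ℕ) : ℝ) ≤ (K n : ℝ) / (q n : ℝ) := Nat.cast_div_le
      have h2 : (K n : ℝ) / (q n : ℝ) ≤ (T * P ^ 8) / (P ^ 4) := by
        apply div_le_div₀ (by positivity) hK_ub (by positivity) hq_lb
      have h3 : (T * P ^ 8) / (P ^ 4) = T * P ^ 4 := by
        field_simp
      nlinarith
    have hMq_ub : ((M n * q n : ℕ) : ℝ) ≤ 2 * (T + 1) * P ^ 8 := by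
      rw [Nat.cast_mul]
      have hq0' : (0 : ℝ) ≤ (q n : ℝ) := Nat.cast_nonneg _
      have hmm : (M n : ℝ) * (q n : ℝ) ≤ ((T + 1) * P ^ 4) * (2 * P ^ 4) :=
        mul_le_mul hM_ub hq_ub hq0' (by positivity)
      have heq2 : ((T + 1) * P ^ 4) * (2 * P ^ 4) = 2 * (T + 1) * P ^ 8 := by ring
      linarith
    have hMq_nn : (0:ℝ) ≤ ((M n * q n : ℕ) : ℝ) := Nat.cast_nonneg _
    have hM1_ub : (M n : ℝ) + 1 ≤ (T + 2) * P ^ 4 := by nlinarith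
    have hμn1 : μ ^ (n + 1) = P ^ 8 * μ := by rw [pow_succ, hP8]
    simp only [hDdef, hμn1, hP7, hP2, hPinv]
    have hinv1 : (0:ℝ) < P ^ 8 * μ := by positivity
    -- four term bounds
    have hT1 : (P ^ 8 * μ)⁻¹ * (P ^ 7 / 2) ≤ (2 * μ)⁻¹ * P⁻¹ := by
      have : (P ^ 8 * μ)⁻¹ * (P ^ 7 / 2) = (2 * μ)⁻¹ * P⁻¹ := by
        field_simp
      linarith
    have hT2 : (P ^ 8 * μ)⁻¹ * ((2 * P ^ 7)⁻¹ *
        (((M n : ℝ) + 1) * (((M n * q n : ℕ) : ℝ) * (P ^ 2 * μ)))) ≤ (T + 2) * (T + 1) * P⁻¹ := by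
      have hnum : ((M n : ℝ) + 1) * (((M n * q n : ℕ) : ℝ) * (P ^ 2 * μ))
          ≤ ((T + 2) * P ^ 4) * ((2 * (T + 1) * P ^ 8) * (P ^ 2 * μ)) := by
        apply mul_le_mul hM1_ub _ (by positivity) (by positivity)
        exact mul_le_mul_of_nonneg_right hMq_ub (by positivity)
      have heq : (P ^ 8 * μ)⁻¹ * ((2 * P ^ 7)⁻¹ *
          (((T + 2) * P ^ 4) * ((2 * (T + 1) * P ^ 8) * (P ^ 2 * μ)))) = (T + 2) * (T + 1) * P⁻¹ := by
        field_simp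
      calc (P ^ 8 * μ)⁻¹ * ((2 * P ^ 7)⁻¹ *
          (((M n : ℝ) + 1) * (((M n * q n : ℕ) : ℝ) * (P ^ 2 * μ))))
          ≤ (P ^ 8 * μ)⁻¹ * ((2 * P ^ 7)⁻¹ *
            (((T + 2) * P ^ 4) * ((2 * (T + 1) * P ^ 8) * (P ^ 2 * μ)))) := by
            apply mul_le_mul_of_nonneg_left _ (by positivity)
            exact mul_le_mul_of_nonneg_left hnum (by positivity)
        _ = (T + 2) * (T + 1) * P⁻¹ := heq
    have hT3 : (P ^ 8 * μ)⁻¹ * (2 * ((M n * q n : ℕ) : ℝ) * Eψ n) ≤ C2 * Eψ n := by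
      have h1 : 2 * ((M n * q n : ℕ) : ℝ) * Eψ n ≤ 2 * (2 * (T + 1) * P ^ 8) * Eψ n := by
        apply mul_le_mul_of_nonneg_right _ (hEψnn n)
        linarith
      have heq : (P ^ 8 * μ)⁻¹ * (2 * (2 * (T + 1) * P ^ 8) * Eψ n) = C2 * Eψ n := by
        rw [hC2def]
        field_simp
        ring
      calc (P ^ 8 * μ)⁻¹ * (2 * ((M n * q n : ℕ) : ℝ) * Eψ n)
          ≤ (P ^ 8 * μ)⁻¹ * (2 * (2 * (T + 1) * P ^ 8) * Eψ n) :=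
            mul_le_mul_of_nonneg_left h1 (by positivity)
        _ = C2 * Eψ n := heq
    have hT4 : (P ^ 8 * μ)⁻¹ * ((q n : ℝ) * μ) ≤ 2 * P⁻¹ := by
      have h1 : (q n : ℝ) * μ ≤ (2 * P ^ 4) * μ := mul_le_mul_of_nonneg_right hq_ub hμpos.le
      have h2 : (P ^ 8 * μ)⁻¹ * ((2 * P ^ 4) * μ) = 2 * (P ^ 4)⁻¹ := by
        field_simp
      have h3 : (P ^ 4)⁻¹ ≤ P⁻¹ := by
        apply inv_anti₀ hP0
        calc P = P ^ 1 := (pow_one P).symm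
          _ ≤ P ^ 4 := pow_le_pow_right₀ hP1 (by norm_num)
      calc (P ^ 8 * μ)⁻¹ * ((q n : ℝ) * μ)
          ≤ (P ^ 8 * μ)⁻¹ * ((2 * P ^ 4) * μ) := mul_le_mul_of_nonneg_left h1 (by positivity)
        _ = 2 * (P ^ 4)⁻¹ := h2
        _ ≤ 2 * P⁻¹ := by linarith
    have hdistrib : (P ^ 8 * μ)⁻¹ * ((P ^ 7 / 2
        + (2 * P ^ 7)⁻¹ * (((M n : ℝ) + 1) * (((M n * q n : ℕ) : ℝ) * (P ^ 2 * μ)))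
        + 2 * ((M n * q n : ℕ) : ℝ) * Eψ n) + (q n : ℝ) * μ)
        = (P ^ 8 * μ)⁻¹ * (P ^ 7 / 2)
        + (P ^ 8 * μ)⁻¹ * ((2 * P ^ 7)⁻¹ * (((M n : ℝ) + 1) * (((M n * q n : ℕ) : ℝ) * (P ^ 2 * μ))))
        + (P ^ 8 * μ)⁻¹ * (2 * ((M n * q n : ℕ) : ℝ) * Eψ n)
        + (P ^ 8 * μ)⁻¹ * ((q n : ℝ) * μ) := by ring
    rw [hdistrib, hC1def]
    linarith
  -- summability of the bound
  have hgeom : Summable fun n : ℕ => (b⁻¹) ^ n :=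
    summable_geometric_of_lt_one (inv_nonneg.2 hb0.le) (inv_lt_one_of_one_lt₀ hb1)
  have htail : Summable Eψ := by
    have h := tail_summable θ0 hpos hint hlog (b ^ 2) (one_lt_pow₀ hb1 two_ne_zero)
    apply h.congr
    intro n
    simp only [hEψdef, pow_mul]
  have hsumRHS : Summable fun n => C1 * (b⁻¹) ^ n + C2 * Eψ n :=
    (hgeom.mul_left C1).add (htail.mul_left C2)
  have hDnn : ∀ n, 0 ≤ D n := by
    intro n
    rw [hDdef]
    have h1 : (0 : ℝ) ≤ (μ ^ (n + 1))⁻¹ := inv_nonneg.2 (pow_nonneg hμpos.le _)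
    apply mul_nonneg h1
    have h2 : (0:ℝ) ≤ (b ^ (7 * n)) / 2 := by positivity
    have h3 : (0:ℝ) ≤ (2 * b ^ (7 * n))⁻¹ *
        (((M n : ℝ) + 1) * (((M n * q n : ℕ) : ℝ) * (b ^ (2 * n) * μ))) := by positivity
    have h4 : (0:ℝ) ≤ 2 * ((M n * q n : ℕ) : ℝ) * Eψ n :=
      mul_nonneg (by positivity) (hEψnn n)
    have h5 : (0:ℝ) ≤ (q n : ℝ) * μ := by positivity
    linarith
  have hDsum : Summable D := Summable.of_nonneg_of_le hDnn hDle hsumRHS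
  -- a.e. summability of Z
  have haeZ : ∀ᵐ ω ∂ℙ, Summable fun n => Z n ω :=
    ae_summable_aux Z (fun n => (hZint n).aemeasurable) hZint hZnn D hDsum hZleD
  -- conclusion
  filter_upwards [haeZ, ae_all_iff.2 hWae] with ω hZsum hWaeω
  have hgeomμ : Summable fun n : ℕ => (μ ^ n)⁻¹ := by
    have := summable_geometric_of_lt_one (inv_nonneg.2 hμpos.le) (inv_lt_one_of_one_lt₀ hμgt)
    apply this.congr
    intro n
    rw [inv_pow]
  have hbound : Summable fun n => Z n ω + (μ ^ n)⁻¹ := hZsum.add hgeomμ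
  apply Summable.of_nonneg_of_le _ _ hbound
  · intro n
    exact Real.iSup_nonneg fun t => abs_nonneg _
  · intro n
    haveI hne : Nonempty (Set.Icc (0 : ℝ) T) := ⟨⟨0, Set.left_mem_Icc.2 hT.le⟩⟩
    apply ciSup_le
    intro t
    obtain ⟨ht0, htT⟩ := t.2
    set k : ℕ := ⌊(t : ℝ) * μ ^ n⌋₊ with hkdef
    have hμnpos : (0:ℝ) < μ ^ n := pow_pos hμpos n
    have hkK : k ≤ K n := by
      rw [hkdef, hKdef]
      exact Nat.floor_le_floor (mul_le_mul_of_nonneg_right htT hμnpos.le)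
    have hWb := hWaeω n k hkK
    set S : ℝ := ∑ i ∈ Finset.range k, θ (n + 1, i) ω with hSdef
    have heq : (μ ^ (n + 1))⁻¹ * S - (t : ℝ)
        = (μ ^ (n + 1))⁻¹ * (S - (k : ℝ) * μ) + ((k : ℝ) / μ ^ n - (t : ℝ)) := by
      have hμn1 : μ ^ (n + 1) = μ ^ n * μ := pow_succ μ n
      field_simp [hμn1]
      ring
    have hfl1 : (k : ℝ) ≤ (t : ℝ) * μ ^ n := Nat.floor_le (by positivity)
    have hfl2 : (t : ℝ) * μ ^ n < (k : ℝ) + 1 := Nat.lt_floor_add_one _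
    have hd1 : (k : ℝ) / μ ^ n ≤ (t : ℝ) := (div_le_iff₀ hμnpos).2 hfl1
    have hd2 : (t : ℝ) < ((k : ℝ) + 1) / μ ^ n := (lt_div_iff₀ hμnpos).2 hfl2
    have hd3 : ((k : ℝ) + 1) / μ ^ n = (k : ℝ) / μ ^ n + (μ ^ n)⁻¹ := by
      rw [add_div, one_div]
    have habs2 : |(k : ℝ) / μ ^ n - (t : ℝ)| ≤ (μ ^ n)⁻¹ := by
      rw [abs_le]
      constructor
      · rw [hd3] at hd2
        linarith
      · have : (0:ℝ) ≤ (μ ^ n)⁻¹ := inv_nonneg.2 hμnpos.le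
        linarith
    have hinv1 : (0:ℝ) ≤ (μ ^ (n + 1))⁻¹ := inv_nonneg.2 (pow_nonneg hμpos.le _)
    calc |(μ ^ (n + 1))⁻¹ * S - (t : ℝ)|
        = |(μ ^ (n + 1))⁻¹ * (S - (k : ℝ) * μ) + ((k : ℝ) / μ ^ n - (t : ℝ))| := by rw [heq]
      _ ≤ |(μ ^ (n + 1))⁻¹ * (S - (k : ℝ) * μ)| + |(k : ℝ) / μ ^ n - (t : ℝ)| := abs_add_le _ _
      _ = (μ ^ (n + 1))⁻¹ * |S - (k : ℝ) * μ| + |(k : ℝ) / μ ^ n - (t : ℝ)| := by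
          rw [abs_mul, abs_of_nonneg hinv1]
      _ ≤ (μ ^ (n + 1))⁻¹ * (W n ω + (q n : ℝ) * μ) + (μ ^ n)⁻¹ := by
          have := mul_le_mul_of_nonneg_left hWb hinv1
          linarith
      _ = Z n ω + (μ ^ n)⁻¹ := by rw [hZdef]
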